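/- Let V = V_Q ⊗ ℝ for a finite-dimensional rational vector space V_Q, and let Q be a subspace of V not contained in any proper subspace of V defined over the rationals. Then there exists v ∈ Q not contained in any proper affine subspace of V defined over the rationals. -/

import Mathlib

open Set

/-- If a subspace `Q` of `V = ℝ^n` is not contained in any proper subspace of `V` defined
over the rationals, then there exists `v ∈ Q` not contained in any proper affine subspace of
`V` defined over the rationals. -/
theorem exists_mem_not_in_rational_affine {n : ℕ} (Q : Submodule ℝ (Fin n → ℝ))
    (hQ : ∀ W : Submodule ℝ (Fin n → ℝ),
      (∃ A ⊆ {w : Fin n → ℝ | ∀ j, ∃ q : ℚ, w j = (q : ℝ)}, W = Submodule.span ℝ A) →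
      (Q : Set (Fin n → ℝ)) ⊆ (W : Set (Fin n → ℝ)) → W = ⊤) :
    ∃ v ∈ Q, ∀ A : Set (Fin n → ℝ),
      A ⊆ {w : Fin n → ℝ | ∀ j, ∃ q : ℚ, w j = (q : ℝ)} →
      v ∈ affineSpan ℝ A → affineSpan ℝ A = ⊤ := by
  classical
  set R : Set (Fin n → ℝ) := {w : Fin n → ℝ | ∀ j, ∃ q : ℚ, w j = (q : ℝ)} with hRdef
  set e : (Fin n → ℚ) → (Fin n → ℝ) := fun q j => (q j : ℝ) with he
  set S : Finset (Fin n → ℚ) → AffineSubspace ℝ (Fin n → ℝ) :=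
    fun s => affineSpan ℝ (e '' ↑s) with hS
  -- any rational-spanned affine subspace containing Q is everything
  have hkey : ∀ A : Set (Fin n → ℝ), A ⊆ R →
      (Q : Set (Fin n → ℝ)) ⊆ (affineSpan ℝ A : Set (Fin n → ℝ)) → affineSpan ℝ A = ⊤ := by
    intro A hA hsub
    have h0 : (0 : Fin n → ℝ) ∈ affineSpan ℝ A := hsub Q.zero_mem
    have h1 : (affineSpan ℝ A : Set (Fin n → ℝ)) = (Submodule.span ℝ A : Set (Fin n → ℝ)) := by
      rw [← affineSpan_insert_eq_affineSpan (k := ℝ) h0, affineSpan_insert_zero]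
    have h2 : Submodule.span ℝ A = ⊤ := by
      refine hQ _ ⟨A, hA, rfl⟩ ?_
      exact fun x hx => h1 ▸ hsub hx
    refine SetLike.coe_injective ?_
    rw [h1, h2]
    simp
  -- e '' s is rational
  have heR : ∀ s : Finset (Fin n → ℚ), e '' ↑s ⊆ R := by
    rintro s x ⟨q, _, rfl⟩ j
    exact ⟨q j, rfl⟩
  -- reduction to finite rational sets
  have hfin : ∀ (v : Fin n → ℝ) (A : Set (Fin n → ℝ)), A ⊆ R → v ∈ affineSpan ℝ A →
      ∃ s : Finset (Fin n → ℚ), e '' ↑s ⊆ A ∧ v ∈ S s := by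
    intro v A hA hv
    have hv' : v ∈ affineSpan ℝ (Set.range (Subtype.val : A → (Fin n → ℝ))) := by
      rwa [Subtype.range_coe]
    obtain ⟨s, w, hw, hcomb⟩ := eq_affineCombination_of_mem_affineSpan hv'
    -- v in affine span of the finite set (val '' s)
    have hmap : s = s.attach.map (Function.Embedding.subtype _) := Finset.attach_map_val.symm
    have hsum : ∑ i ∈ s.attach, (w ∘ (Function.Embedding.subtype _)) i = 1 := by
      simp only [Function.comp_apply, Function.Embedding.coe_subtype]
      rw [Finset.sum_attach]; exact hw
    have hcomb2 : v = s.attach.affineCombination ℝ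
        ((Subtype.val : A → (Fin n → ℝ)) ∘ ⇑(Function.Embedding.subtype _ : ↥s ↪ A))
        (w ∘ ⇑(Function.Embedding.subtype _ : ↥s ↪ A)) := by
      rw [hcomb]
      conv_lhs => rw [hmap]
      rw [Finset.affineCombination_map]
    have hv2 : v ∈ affineSpan ℝ
        (Set.range ((Subtype.val : A → (Fin n → ℝ)) ∘ (Function.Embedding.subtype _ : ↥s ↪ A))) := by
      rw [hcomb2]
      exact affineCombination_mem_affineSpan (k := ℝ) hsum
        ((Subtype.val : A → (Fin n → ℝ)) ∘ ⇑(Function.Embedding.subtype _ : ↥s ↪ A))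
    have hrange : Set.range ((Subtype.val : A → (Fin n → ℝ)) ∘
        (Function.Embedding.subtype _ : ↥s ↪ A)) = Subtype.val '' (↑s : Set A) := by
      rw [Set.range_comp]
      simp [Function.Embedding.subtype]
      exact Subtype.range_coe_subtype
    rw [hrange] at hv2
    -- rationalize
    let c : (Fin n → ℝ) → (Fin n → ℚ) := fun x j =>
      if h : ∃ q : ℚ, x j = (q : ℝ) then h.choose else 0
    have hec : ∀ x ∈ R, e (c x) = x := by
      intro x hx
      funext j
      have h : ∃ q : ℚ, x j = (q : ℝ) := hx j
      simp only [he, c, dif_pos h]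
      exact h.choose_spec.symm
    refine ⟨s.image (fun i : A => c i.val), ?_, ?_⟩
    · rintro x ⟨q, hq, rfl⟩
      rw [Finset.coe_image] at hq
      obtain ⟨i, hi, rfl⟩ := hq
      rw [hec i.val (hA i.2)]
      exact i.2
    · have : e '' ↑(s.image (fun i : A => c i.val)) = Subtype.val '' (↑s : Set A) := by
        rw [Finset.coe_image, ← Set.image_comp]
        ext x
        constructor
        · rintro ⟨i, hi, rfl⟩
          exact ⟨i, hi, (hec i.val (hA i.2)).symm⟩
        · rintro ⟨i, hi, rfl⟩
          exact ⟨i, hi, (hec i.val (hA i.2))⟩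
      show v ∈ affineSpan ℝ (e '' ↑(s.image (fun i : A => c i.val)))
      rw [this]
      exact hv2
  -- main argument by Baire
  by_contra hcon
  push_neg at hcon
  -- every point of Q is in some proper S s
  have hcover : ∀ x : ↥Q, ∃ s : Finset (Fin n → ℚ), S s ≠ ⊤ ∧ (x : Fin n → ℝ) ∈ S s := by
    intro x
    obtain ⟨A, hA, hmem, hne⟩ := hcon x.val x.2
    obtain ⟨s, hsub, hvs⟩ := hfin x.val A hA hmem
    refine ⟨s, fun htop => hne ?_, hvs⟩
    have : S s ≤ affineSpan ℝ A := affineSpan_mono ℝ hsub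
    rw [htop] at this
    exact top_unique this
  let f : Finset (Fin n → ℚ) → Set ↥Q :=
    fun s => if S s = ⊤ then ∅ else Subtype.val ⁻¹' (S s : Set (Fin n → ℝ))
  have hclosed : ∀ s, IsClosed (f s) := by
    intro s
    by_cases h : S s = ⊤
    · simp [f, h]
    · simp only [f, if_neg h]
      exact ((S s).closed_of_finiteDimensional).preimage continuous_subtype_val
  have hunion : ⋃ s, f s = Set.univ := by
    refine Set.eq_univ_of_forall fun x => ?_
    obtain ⟨s, hne, hx⟩ := hcover x
    exact Set.mem_iUnion.2 ⟨s, by simp [f, if_neg hne, hx]⟩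
  obtain ⟨s, hint⟩ := nonempty_interior_of_iUnion_of_closed hclosed hunion
  have hne : S s ≠ ⊤ := by
    intro h
    rw [show f s = ∅ by simp [f, h]] at hint
    simp at hint
  rw [show f s = Subtype.val ⁻¹' (S s : Set (Fin n → ℝ)) by simp [f, if_neg hne]] at hint
  -- the preimage is an affine subspace of Q with nonempty interior, hence all of Q
  set T : AffineSubspace ℝ ↥Q := (S s).comap (Q.subtype.toAffineMap) with hT
  have hTcoe : (T : Set ↥Q) = Subtype.val ⁻¹' (S s : Set (Fin n → ℝ)) := by
    rw [hT, AffineSubspace.coe_comap]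
    rfl
  have hTtop : T = ⊤ := by
    have h1 : affineSpan ℝ (interior (T : Set ↥Q)) = ⊤ :=
      isOpen_interior.affineSpan_eq_top (hTcoe ▸ hint)
    have h2 : affineSpan ℝ (interior (T : Set ↥Q)) ≤ affineSpan ℝ (T : Set ↥Q) :=
      affineSpan_mono ℝ interior_subset
    rw [h1, AffineSubspace.affineSpan_coe] at h2
    exact top_unique h2
  -- hence Q ⊆ S s, contradicting properness
  apply hne
  have hsub : (Q : Set (Fin n → ℝ)) ⊆ (S s : Set (Fin n → ℝ)) := by
    intro x hx
    have : (⟨x, hx⟩ : ↥Q) ∈ T := hTtop ▸ AffineSubspace.mem_top ℝ _ _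
    rw [← SetLike.mem_coe, hTcoe] at this
    exact this
  exact hkey (e '' ↑s) (heR s) hsub
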